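/- On the unit square with Lebesgue area measure and the componentwise-≤ relation, for T_min(a) = {(x₁,x₂) ∈ [0,1]² : min(x₁,x₂) ≤ a}, the diversity div(T_min(a)) tends to 3/4 as a → 0⁺. -/
import Mathlib

open MeasureTheory Filter
open scoped ENNReal

/-- The componentwise-≤ relation on `ℝ²`. -/
def Rsq (p q : ℝ × ℝ) : Prop := p.1 ≤ q.1 ∧ p.2 ≤ q.2

/-- Lebesgue area measure restricted to the unit square `[0,1]²`. -/
noncomputable def μsq : Measure (ℝ × ℝ) :=
  (volume : Measure (ℝ × ℝ)).restrict (Set.Icc 0 1 ×ˢ Set.Icc 0 1)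

/-- The choice offered by a set `A`. -/
noncomputable def cho (A : Set (ℝ × ℝ)) : ℝ≥0∞ :=
  (μsq.prod μsq) {p : (ℝ × ℝ) × (ℝ × ℝ) |
    p.1 ∈ A ∧ p.2 ∈ A ∧ (Rsq p.1 p.2 ↔ Rsq p.2 p.1)}

namespace TminAux

lemma lint_Ioc (a : ℝ) (h0 : 0 ≤ a) (h1 : a ≤ 1) :
    ∫⁻ t in Set.Ioc a 1, ENNReal.ofReal t = ENNReal.ofReal ((1 - a^2)/2) := by
  rw [← ofReal_integral_eq_lintegral_ofReal]
  · congr 1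
    rw [← intervalIntegral.integral_of_le h1, integral_id]
    ring
  · exact (intervalIntegral.intervalIntegrable_id (μ := volume) (a := a) (b := 1)).1
  · filter_upwards [self_mem_ae_restrict measurableSet_Ioc] with t ht
    exact le_trans h0 ht.1.le

lemma lint_Icc : ∫⁻ t in Set.Icc (0:ℝ) 1, ENNReal.ofReal t = ENNReal.ofReal (1/2) := by
  rw [← Measure.restrict_congr_set MeasureTheory.Ioc_ae_eq_Icc, lint_Ioc 0 le_rfl zero_le_one]
  norm_num

lemma vol4 (J₁ J₂ : Set ℝ) (m₁ : MeasurableSet J₁) (m₂ : MeasurableSet J₂)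
    (s₁ : J₁ ⊆ Set.Icc 0 1) (s₂ : J₂ ⊆ Set.Icc 0 1) :
    (volume : Measure ((ℝ×ℝ)×(ℝ×ℝ)))
      {p : (ℝ×ℝ)×(ℝ×ℝ) | (p.1.1 ∈ Set.Icc (0:ℝ) 1 ∧ p.1.2 ∈ Set.Icc (0:ℝ) 1) ∧
        (p.2.1 ∈ J₁ ∧ p.2.2 ∈ J₂) ∧ p.1.1 ≤ p.2.1 ∧ p.1.2 ≤ p.2.2}
      = (∫⁻ t in J₁, ENNReal.ofReal t) * (∫⁻ t in J₂, ENNReal.ofReal t) := by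
  have hA' : MeasurableSet {q : (ℝ×ℝ)×(ℝ×ℝ) | (q.1.1 ∈ J₁ ∧ q.1.2 ∈ J₂) ∧
      (q.2.1 ∈ Set.Icc (0:ℝ) 1 ∧ q.2.2 ∈ Set.Icc (0:ℝ) 1) ∧ q.2.1 ≤ q.1.1 ∧ q.2.2 ≤ q.1.2} := by
    apply MeasurableSet.inter
    · exact ((m₁.preimage measurable_fst.fst).inter (m₂.preimage measurable_fst.snd))
    apply MeasurableSet.inter
    · exact ((measurableSet_Icc.preimage measurable_snd.fst).inter
        (measurableSet_Icc.preimage measurable_snd.snd))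
    · exact (measurableSet_le measurable_snd.fst measurable_fst.fst).inter
        (measurableSet_le measurable_snd.snd measurable_fst.snd)
  have hswap : {p : (ℝ×ℝ)×(ℝ×ℝ) | (p.1.1 ∈ Set.Icc (0:ℝ) 1 ∧ p.1.2 ∈ Set.Icc (0:ℝ) 1) ∧
        (p.2.1 ∈ J₁ ∧ p.2.2 ∈ J₂) ∧ p.1.1 ≤ p.2.1 ∧ p.1.2 ≤ p.2.2}
      = Prod.swap ⁻¹' {q : (ℝ×ℝ)×(ℝ×ℝ) | (q.1.1 ∈ J₁ ∧ q.1.2 ∈ J₂) ∧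
        (q.2.1 ∈ Set.Icc (0:ℝ) 1 ∧ q.2.2 ∈ Set.Icc (0:ℝ) 1) ∧ q.2.1 ≤ q.1.1 ∧ q.2.2 ≤ q.1.2} := by
    ext p; simp [Prod.swap]; tauto
  rw [hswap, Measure.volume_eq_prod,
    Measure.measurePreserving_swap.measure_preimage hA'.nullMeasurableSet,
    Measure.prod_apply hA']
  have hslice : ∀ y : ℝ×ℝ, (volume : Measure (ℝ×ℝ)) (Prod.mk y ⁻¹' {q : (ℝ×ℝ)×(ℝ×ℝ) | (q.1.1 ∈ J₁ ∧ q.1.2 ∈ J₂) ∧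
      (q.2.1 ∈ Set.Icc (0:ℝ) 1 ∧ q.2.2 ∈ Set.Icc (0:ℝ) 1) ∧ q.2.1 ≤ q.1.1 ∧ q.2.2 ≤ q.1.2}) =
      Set.indicator (J₁ ×ˢ J₂) (fun y : ℝ×ℝ => ENNReal.ofReal y.1 * ENNReal.ofReal y.2) y := by
    intro y
    by_cases hy : y ∈ J₁ ×ˢ J₂
    · rw [Set.indicator_of_mem hy]
      have : (Prod.mk y ⁻¹' {q : (ℝ×ℝ)×(ℝ×ℝ) | (q.1.1 ∈ J₁ ∧ q.1.2 ∈ J₂) ∧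
          (q.2.1 ∈ Set.Icc (0:ℝ) 1 ∧ q.2.2 ∈ Set.Icc (0:ℝ) 1) ∧ q.2.1 ≤ q.1.1 ∧ q.2.2 ≤ q.1.2})
          = Set.Icc 0 y.1 ×ˢ Set.Icc 0 y.2 := by
        have h1 := s₁ hy.1; have h2 := s₂ hy.2
        ext x
        simp only [Set.mem_preimage, Set.mem_setOf_eq, Set.mem_prod, Set.mem_Icc]
        constructor
        · rintro ⟨-, ⟨⟨a1, b1⟩, a2, b2⟩, c1, c2⟩; exact ⟨⟨a1, c1⟩, a2, c2⟩
        · rintro ⟨⟨a1, c1⟩, a2, c2⟩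
          exact ⟨hy, ⟨⟨a1, c1.trans h1.2⟩, a2, c2.trans h2.2⟩, c1, c2⟩
      rw [this, Measure.volume_eq_prod, Measure.prod_prod, Real.volume_Icc, Real.volume_Icc]
      simp
    · rw [Set.indicator_of_notMem hy]
      have : (Prod.mk y ⁻¹' {q : (ℝ×ℝ)×(ℝ×ℝ) | (q.1.1 ∈ J₁ ∧ q.1.2 ∈ J₂) ∧
          (q.2.1 ∈ Set.Icc (0:ℝ) 1 ∧ q.2.2 ∈ Set.Icc (0:ℝ) 1) ∧ q.2.1 ≤ q.1.1 ∧ q.2.2 ≤ q.1.2})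
          = ∅ := by
        ext x; simp only [Set.mem_preimage, Set.mem_setOf_eq, Set.mem_empty_iff_false, iff_false]
        rintro ⟨h, -⟩; exact hy h
      rw [this]; simp
  rw [lintegral_congr hslice, lintegral_indicator (m₁.prod m₂) _, Measure.volume_eq_prod,
    ← Measure.prod_restrict,
    lintegral_prod_mul (by fun_prop) (by fun_prop)]

/-- the vertical-hyperplane set is null -/
lemma null_diag : (volume : Measure ((ℝ×ℝ)×(ℝ×ℝ))) {p : (ℝ×ℝ)×(ℝ×ℝ) | p.1.1 = p.2.1} = 0 := by
  have hm : MeasurableSet {p : (ℝ×ℝ)×(ℝ×ℝ) | p.1.1 = p.2.1} :=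
    measurableSet_eq_fun measurable_fst.fst measurable_snd.fst
  rw [Measure.volume_eq_prod, Measure.prod_apply hm]
  have h0 : ∀ x : ℝ×ℝ, (volume : Measure (ℝ×ℝ)) {y : ℝ×ℝ | x.1 = y.1} = 0 := by
    intro x
    have : {y : ℝ×ℝ | x.1 = y.1} = ({x.1} : Set ℝ) ×ˢ (Set.univ : Set ℝ) := by
      ext y
      simp only [Set.mem_setOf_eq, Set.mem_prod, Set.mem_singleton_iff, Set.mem_univ, and_true]
      exact eq_comm
    rw [this, Measure.volume_eq_prod, Measure.prod_prod]
    simp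
  have : ∀ x : ℝ×ℝ, (volume : Measure (ℝ×ℝ)) (Prod.mk x ⁻¹' {p : (ℝ×ℝ)×(ℝ×ℝ) | p.1.1 = p.2.1}) = 0 := fun x => h0 x
  rw [lintegral_congr this, lintegral_zero]

lemma TSQ (a : ℝ) :
    (Set.Icc 0 1 ×ˢ Set.Icc 0 1 : Set (ℝ×ℝ)) ∩ {p : ℝ×ℝ | min p.1 p.2 ≤ a}
      = (Set.Icc 0 1 ×ˢ Set.Icc 0 1) \ (Set.Ioc a 1 ×ˢ Set.Ioc a 1) := by
  ext p
  simp only [Set.mem_inter_iff, Set.mem_diff, Set.mem_prod, Set.mem_Icc, Set.mem_Ioc,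
    Set.mem_setOf_eq, min_le_iff]
  constructor
  · rintro ⟨hS, hm⟩
    refine ⟨hS, fun hq => ?_⟩
    rcases hm with h | h
    · exact absurd h (not_le.2 hq.1.1)
    · exact absurd h (not_le.2 hq.2.1)
  · rintro ⟨hS, hq⟩
    refine ⟨hS, ?_⟩
    by_contra hc
    push_neg at hc
    exact hq ⟨⟨hc.1, hS.1.2⟩, hc.2, hS.2.2⟩

lemma volT (a : ℝ) (h0 : 0 ≤ a) (h1 : a ≤ 1) :
    (volume : Measure (ℝ×ℝ)) ((Set.Icc 0 1 ×ˢ Set.Icc 0 1) ∩ {p : ℝ×ℝ | min p.1 p.2 ≤ a})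
      = ENNReal.ofReal (2*a - a^2) := by
  have hQS : (Set.Ioc a 1 ×ˢ Set.Ioc a 1 : Set (ℝ×ℝ)) ⊆ Set.Icc 0 1 ×ˢ Set.Icc 0 1 :=
    Set.prod_mono (Set.Ioc_subset_Icc_self.trans (Set.Icc_subset_Icc h0 le_rfl))
      (Set.Ioc_subset_Icc_self.trans (Set.Icc_subset_Icc h0 le_rfl))
  rw [TSQ a, measure_diff hQS (measurableSet_Ioc.prod measurableSet_Ioc).nullMeasurableSet]
  · rw [Measure.volume_eq_prod, Measure.prod_prod, Measure.prod_prod, Real.volume_Icc,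
      Real.volume_Ioc, ← ENNReal.ofReal_mul (by norm_num), ← ENNReal.ofReal_mul (by linarith),
      ← ENNReal.ofReal_sub _ (by nlinarith)]
    congr 1; ring
  · rw [Measure.volume_eq_prod, Measure.prod_prod, Real.volume_Ioc]
    exact ENNReal.mul_ne_top ENNReal.ofReal_ne_top ENNReal.ofReal_ne_top


lemma cho_eq (a : ℝ) (h0 : 0 ≤ a) (h1 : a ≤ 1) :
    cho {p : ℝ × ℝ | min p.1 p.2 ≤ a} = ENNReal.ofReal (3*a^2 - 4*a^3 + 3/2*a^4) := by
  classical
  have hnn1 : (0:ℝ) ≤ 2*a - a^2 := by nlinarith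
  have hnn2 : (0:ℝ) ≤ (1 - a^2)/2 := by nlinarith
  have hnn3 : (0:ℝ) ≤ a^2/2 - a^4/4 := by nlinarith
  set S : Set (ℝ×ℝ) := Set.Icc 0 1 ×ˢ Set.Icc 0 1 with hSdef
  set A : Set (ℝ×ℝ) := {p : ℝ×ℝ | min p.1 p.2 ≤ a} with hAdef
  set Q : Set (ℝ×ℝ) := Set.Ioc a 1 ×ˢ Set.Ioc a 1 with hQdef
  set T : Set (ℝ×ℝ) := S ∩ A with hTdef
  set D : Set ((ℝ×ℝ)×(ℝ×ℝ)) := {p | p.1.1 ≤ p.2.1 ∧ p.1.2 ≤ p.2.2} with hDdef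
  set Dr : Set ((ℝ×ℝ)×(ℝ×ℝ)) := {p | p.2.1 ≤ p.1.1 ∧ p.2.2 ≤ p.1.2} with hDrdef
  have mA : MeasurableSet A := measurableSet_le (measurable_fst.min measurable_snd) measurable_const
  have mS : MeasurableSet S := measurableSet_Icc.prod measurableSet_Icc
  have mT : MeasurableSet T := mS.inter mA
  have mQ : MeasurableSet Q := measurableSet_Ioc.prod measurableSet_Ioc
  have mD : MeasurableSet D :=
    (measurableSet_le measurable_fst.fst measurable_snd.fst).inter
      (measurableSet_le measurable_fst.snd measurable_snd.snd)
  have mDr : MeasurableSet Dr :=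
    (measurableSet_le measurable_snd.fst measurable_fst.fst).inter
      (measurableSet_le measurable_snd.snd measurable_fst.snd)
  have hQS : Q ⊆ S :=
    Set.prod_mono (Set.Ioc_subset_Icc_self.trans (Set.Icc_subset_Icc h0 le_rfl))
      (Set.Ioc_subset_Icc_self.trans (Set.Icc_subset_Icc h0 le_rfl))
  -- Step 0: rewrite cho as a plain 4-dimensional volume
  have mE : MeasurableSet {p : (ℝ×ℝ)×(ℝ×ℝ) | p.1 ∈ A ∧ p.2 ∈ A ∧ (Rsq p.1 p.2 ↔ Rsq p.2 p.1)} := by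
    have : {p : (ℝ×ℝ)×(ℝ×ℝ) | p.1 ∈ A ∧ p.2 ∈ A ∧ (Rsq p.1 p.2 ↔ Rsq p.2 p.1)}
        = (A ×ˢ A) ∩ ((D ∩ Dr) ∪ (Dᶜ ∩ Drᶜ)) := by
      ext p
      simp only [Set.mem_setOf_eq, Set.mem_inter_iff, Set.mem_prod, Set.mem_union,
        Set.mem_compl_iff, Rsq, hDdef, hDrdef]
      tauto
    rw [this]
    exact (mA.prod mA).inter ((mD.inter mDr).union (mD.compl.inter mDr.compl))
  have step0 : cho A = volume ((T ×ˢ T) ∩ {p : (ℝ×ℝ)×(ℝ×ℝ) | p ∈ D ↔ p ∈ Dr}) := by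
    rw [cho, μsq, ← hSdef, Measure.prod_restrict, Measure.restrict_apply mE,
      ← Measure.volume_eq_prod]
    congr 1
    ext p
    simp only [Set.mem_inter_iff, Set.mem_prod, Set.mem_setOf_eq, Rsq, hTdef, hDdef, hDrdef,
      hAdef]
    tauto
  rw [step0]
  -- notation for the three pieces
  have mIff : MeasurableSet {p : (ℝ×ℝ)×(ℝ×ℝ) | p ∈ D ↔ p ∈ Dr} := by
    have : {p : (ℝ×ℝ)×(ℝ×ℝ) | p ∈ D ↔ p ∈ Dr} = (D ∩ Dr) ∪ (Dᶜ ∩ Drᶜ) := by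
      ext p; simp only [Set.mem_setOf_eq, Set.mem_union, Set.mem_inter_iff, Set.mem_compl_iff]
      tauto
    rw [this]; exact (mD.inter mDr).union (mD.compl.inter mDr.compl)
  -- swap symmetry
  have hswapset : (T ×ˢ T) ∩ (Dr \ D) = Prod.swap ⁻¹' ((T ×ˢ T) ∩ (D \ Dr)) := by
    ext p
    simp only [Set.mem_inter_iff, Set.mem_prod, Set.mem_diff, Set.mem_preimage, Set.mem_setOf_eq,
      Prod.fst_swap, Prod.snd_swap, hDdef, hDrdef]
    tauto
  have hsw : volume ((T ×ˢ T) ∩ (Dr \ D)) = volume ((T ×ˢ T) ∩ (D \ Dr)) := by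
    rw [hswapset, Measure.volume_eq_prod,
      Measure.measurePreserving_swap.measure_preimage
        (((mT.prod mT).inter (mD.diff mDr)).nullMeasurableSet), ← Measure.volume_eq_prod]
  -- diff vs full D
  have hF : volume ((T ×ˢ T) ∩ (D \ Dr)) = volume ((T ×ˢ T) ∩ D) := by
    refine le_antisymm (measure_mono (Set.inter_subset_inter_right _ Set.diff_subset)) ?_
    have hsub : (T ×ˢ T) ∩ D ⊆ ((T ×ˢ T) ∩ (D \ Dr)) ∪ {p : (ℝ×ℝ)×(ℝ×ℝ) | p.1.1 = p.2.1} := by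
      rintro p ⟨hpT, hpD⟩
      by_cases hDr' : p ∈ Dr
      · exact Or.inr (le_antisymm hpD.1 hDr'.1)
      · exact Or.inl ⟨hpT, hpD, hDr'⟩
    calc volume ((T ×ˢ T) ∩ D)
        ≤ volume (((T ×ˢ T) ∩ (D \ Dr)) ∪ {p : (ℝ×ℝ)×(ℝ×ℝ) | p.1.1 = p.2.1}) :=
          measure_mono hsub
      _ ≤ volume ((T ×ˢ T) ∩ (D \ Dr)) + volume {p : (ℝ×ℝ)×(ℝ×ℝ) | p.1.1 = p.2.1} :=
          measure_union_le _ _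
      _ = volume ((T ×ˢ T) ∩ (D \ Dr)) := by rw [null_diag, add_zero]
  -- enlarge first factor
  have hTD : (T ×ˢ T) ∩ D = (S ×ˢ T) ∩ D := by
    ext p
    simp only [Set.mem_inter_iff, Set.mem_prod, hTdef, hAdef, Set.mem_setOf_eq, hDdef]
    constructor
    · rintro ⟨⟨⟨h1S, h1A⟩, h2⟩, hd⟩; exact ⟨⟨h1S, h2⟩, hd⟩
    · rintro ⟨⟨h1S, h2S, h2A⟩, hd⟩
      exact ⟨⟨⟨h1S, le_trans (min_le_min hd.1 hd.2) h2A⟩, h2S, h2A⟩, hd⟩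
  have hSTD : (S ×ˢ T) ∩ D = ((S ×ˢ S) ∩ D) \ ((S ×ˢ Q) ∩ D) := by
    have hTQ : T = S \ Q := by rw [hTdef, hSdef, hAdef, hQdef]; exact TSQ a
    rw [hTQ]
    ext p
    simp only [Set.mem_inter_iff, Set.mem_prod, Set.mem_diff]
    tauto
  -- the two rectangle volumes
  have c1 : volume ((S ×ˢ S) ∩ D) = ENNReal.ofReal (1/2) * ENNReal.ofReal (1/2) := by
    have : (S ×ˢ S) ∩ D = {p : (ℝ×ℝ)×(ℝ×ℝ) | (p.1.1 ∈ Set.Icc (0:ℝ) 1 ∧ p.1.2 ∈ Set.Icc (0:ℝ) 1) ∧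
        (p.2.1 ∈ Set.Icc (0:ℝ) 1 ∧ p.2.2 ∈ Set.Icc (0:ℝ) 1) ∧ p.1.1 ≤ p.2.1 ∧ p.1.2 ≤ p.2.2} := by
      ext p
      simp only [Set.mem_inter_iff, Set.mem_prod, Set.mem_setOf_eq, hSdef, hDdef]
      tauto
    rw [this, vol4 _ _ measurableSet_Icc measurableSet_Icc subset_rfl subset_rfl, lint_Icc]
  have c2 : volume ((S ×ˢ Q) ∩ D)
      = ENNReal.ofReal ((1 - a^2)/2) * ENNReal.ofReal ((1 - a^2)/2) := by
    have : (S ×ˢ Q) ∩ D = {p : (ℝ×ℝ)×(ℝ×ℝ) | (p.1.1 ∈ Set.Icc (0:ℝ) 1 ∧ p.1.2 ∈ Set.Icc (0:ℝ) 1) ∧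
        (p.2.1 ∈ Set.Ioc a 1 ∧ p.2.2 ∈ Set.Ioc a 1) ∧ p.1.1 ≤ p.2.1 ∧ p.1.2 ≤ p.2.2} := by
      ext p
      simp only [Set.mem_inter_iff, Set.mem_prod, Set.mem_setOf_eq, hSdef, hQdef, hDdef]
      tauto
    rw [this, vol4 _ _ measurableSet_Ioc measurableSet_Ioc
      (Set.Ioc_subset_Icc_self.trans (Set.Icc_subset_Icc h0 le_rfl))
      (Set.Ioc_subset_Icc_self.trans (Set.Icc_subset_Icc h0 le_rfl)), lint_Ioc a h0 h1]
  have P : volume ((T ×ˢ T) ∩ (D \ Dr)) = ENNReal.ofReal (a^2/2 - a^4/4) := by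
    rw [hF, hTD, hSTD, measure_diff
      (Set.inter_subset_inter (Set.prod_mono subset_rfl hQS) subset_rfl)
      (((mS.prod mQ).inter mD).nullMeasurableSet)
      (by rw [c2]; exact ENNReal.mul_ne_top ENNReal.ofReal_ne_top ENNReal.ofReal_ne_top),
      c1, c2, ← ENNReal.ofReal_mul (by norm_num), ← ENNReal.ofReal_mul hnn2,
      ← ENNReal.ofReal_sub _ (by nlinarith)]
    congr 1; ring
  -- total volume of T ×ˢ T
  have tot : volume (T ×ˢ T) = ENNReal.ofReal ((2*a - a^2)^2) := by
    rw [Measure.volume_eq_prod, Measure.prod_prod, hTdef, hSdef, hAdef, volT a h0 h1,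
      ← ENNReal.ofReal_mul hnn1]
    congr 1; ring
  -- partition
  have hU : (T ×ˢ T) = (((T ×ˢ T) ∩ {p : (ℝ×ℝ)×(ℝ×ℝ) | p ∈ D ↔ p ∈ Dr}) ∪ ((T ×ˢ T) ∩ (D \ Dr)))
      ∪ ((T ×ˢ T) ∩ (Dr \ D)) := by
    ext p
    simp only [Set.mem_union, Set.mem_inter_iff, Set.mem_setOf_eq, Set.mem_diff]
    tauto
  have d1 : Disjoint ((T ×ˢ T) ∩ {p : (ℝ×ℝ)×(ℝ×ℝ) | p ∈ D ↔ p ∈ Dr}) ((T ×ˢ T) ∩ (D \ Dr)) := by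
    rw [Set.disjoint_left]
    rintro p ⟨-, hiff⟩ ⟨-, hD', hnDr⟩
    exact hnDr (hiff.mp hD')
  have d2 : Disjoint (((T ×ˢ T) ∩ {p : (ℝ×ℝ)×(ℝ×ℝ) | p ∈ D ↔ p ∈ Dr}) ∪ ((T ×ˢ T) ∩ (D \ Dr)))
      ((T ×ˢ T) ∩ (Dr \ D)) := by
    rw [Set.disjoint_left]
    rintro p (⟨-, hiff⟩ | ⟨-, -, hnDr⟩) ⟨-, hDr', hnD⟩
    · exact hnD (hiff.mpr hDr')
    · exact hnDr hDr'
  have hsum : ENNReal.ofReal ((2*a - a^2)^2)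
      = volume ((T ×ˢ T) ∩ {p : (ℝ×ℝ)×(ℝ×ℝ) | p ∈ D ↔ p ∈ Dr})
        + ENNReal.ofReal (a^2 - a^4/2) := by
    rw [← tot]
    conv_lhs => rw [hU]
    rw [measure_union d2 ((mT.prod mT).inter (mDr.diff mD)),
      measure_union d1 ((mT.prod mT).inter (mD.diff mDr)), P, hsw.trans P, add_assoc,
      ← ENNReal.ofReal_add hnn3 hnn3]
    congr 2; ring
  have := ENNReal.eq_sub_of_add_eq ENNReal.ofReal_ne_top hsum.symm
  rw [this, ← ENNReal.ofReal_sub _ (by nlinarith : (0:ℝ) ≤ a^2 - a^4/2)]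
  congr 1; ring


lemma musq_eq (a : ℝ) (h0 : 0 ≤ a) (h1 : a ≤ 1) :
    μsq {p : ℝ × ℝ | min p.1 p.2 ≤ a} = ENNReal.ofReal (2*a - a^2) := by
  have mA : MeasurableSet {p : ℝ×ℝ | min p.1 p.2 ≤ a} :=
    measurableSet_le (measurable_fst.min measurable_snd) measurable_const
  rw [μsq, Measure.restrict_apply mA, Set.inter_comm, volT a h0 h1]

end TminAux

/-- For `T_min(a) = {(x₁,x₂) ∈ [0,1]² : min(x₁,x₂) ≤ a}`, the diversity
`div(T_min(a)) = cho(T_min(a))/μ(T_min(a))²` tends to `3/4` as `a → 0⁺`. -/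
theorem diversity_Tmin_tendsto :
    Tendsto
      (fun a : ℝ =>
        (cho {p : ℝ × ℝ | min p.1 p.2 ≤ a}).toReal
          / ((μsq {p : ℝ × ℝ | min p.1 p.2 ≤ a}).toReal) ^ 2)
      (nhdsWithin 0 (Set.Ioi 0)) (nhds (3 / 4)) := by
  have hev : ∀ᶠ a in nhdsWithin (0:ℝ) (Set.Ioi 0),
      (3 - 4*a + 3/2*a^2)/(2 - a)^2
        = (cho {p : ℝ × ℝ | min p.1 p.2 ≤ a}).toReal
            / ((μsq {p : ℝ × ℝ | min p.1 p.2 ≤ a}).toReal) ^ 2 := by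
    filter_upwards [Ioo_mem_nhdsGT_of_mem (by norm_num : (0:ℝ) ∈ Set.Ico 0 1)] with a ha
    obtain ⟨ha0, ha1⟩ := ha
    rw [TminAux.cho_eq a ha0.le ha1.le, TminAux.musq_eq a ha0.le ha1.le,
      ENNReal.toReal_ofReal (by nlinarith [sq_nonneg (a*(3*a - 4)), sq_nonneg a]),
      ENNReal.toReal_ofReal (by nlinarith)]
    have e1 : (2*a - a^2)^2 = a^2 * (2-a)^2 := by ring
    have e2 : 3*a^2 - 4*a^3 + 3/2*a^4 = a^2 * (3 - 4*a + 3/2*a^2) := by ring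
    rw [e1, e2, mul_div_mul_left _ _ (pow_ne_zero 2 (ne_of_gt ha0))]
  have hcont : ContinuousAt (fun a : ℝ => (3 - 4*a + 3/2*a^2)/(2 - a)^2) 0 :=
    ContinuousAt.div (by fun_prop) (by fun_prop) (by norm_num)
  have hg : Tendsto (fun a : ℝ => (3 - 4*a + 3/2*a^2)/(2 - a)^2)
      (nhdsWithin 0 (Set.Ioi 0)) (nhds (3/4)) := by
    have h40 : ((3 - 4*(0:ℝ) + 3/2*(0:ℝ)^2)/((2:ℝ) - 0)^2) = 3/4 := by norm_num
    exact h40 ▸ (hcont.tendsto.mono_left nhdsWithin_le_nhds)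
  exact hg.congr' hev
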